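/- The number of subgroups of index n in ℤ³ equals ω(n) = Σ_{abc = n} a²b, where the sum is over ordered triples of positive integers with abc = n. -/

import Mathlib

open AddSubgroup

section Step

variable {G : Type*} [AddCommGroup G]

lemma int_eq_zmultiples_index (S : AddSubgroup ℤ) : S = zmultiples ((S.index : ℤ)) := by
  obtain ⟨a, ha⟩ := Int.subgroup_cyclic S
  rw [← zmultiples_eq_closure] at ha
  rw [ha, Int.index_zmultiples, Int.zmultiples_natAbs]

/-- reconstruction map -/
def psi (c : ℕ) (K : AddSubgroup G) (q : G ⧸ K) : AddSubgroup (ℤ × G) :=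
  AddSubgroup.comap ((AddMonoidHom.id ℤ).prodMap (QuotientAddGroup.mk' K))
    (zmultiples ((c : ℤ), q))

lemma mem_psi {c : ℕ} {K : AddSubgroup G} {q : G ⧸ K} {t : ℤ} {g : G} :
    (t, g) ∈ psi c K q ↔ ∃ k : ℤ, k * (c : ℤ) = t ∧ k • q = (g : G ⧸ K) := by
  simp only [psi, AddSubgroup.mem_comap, mem_zmultiples_iff, AddMonoidHom.coe_prodMap,
    Prod.map_apply, AddMonoidHom.id_apply, QuotientAddGroup.mk'_apply, Prod.smul_mk,
    Prod.mk.injEq, smul_eq_mul]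

noncomputable def cOf (H : AddSubgroup (ℤ × G)) : ℕ := (H.map (AddMonoidHom.fst ℤ G)).index

lemma map_fst_eq (H : AddSubgroup (ℤ × G)) :
    H.map (AddMonoidHom.fst ℤ G) = zmultiples ((cOf H : ℤ)) := int_eq_zmultiples_index _

lemma exists_c_mem (H : AddSubgroup (ℤ × G)) : ∃ g : G, ((cOf H : ℤ), g) ∈ H := by
  have h : ((cOf H : ℤ)) ∈ H.map (AddMonoidHom.fst ℤ G) := by
    rw [map_fst_eq]; exact mem_zmultiples _
  obtain ⟨⟨t, g⟩, hx, hfst⟩ := h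
  exact ⟨g, by simpa [show t = (cOf H : ℤ) from hfst] using hx⟩

def KOf (H : AddSubgroup (ℤ × G)) : AddSubgroup G := H.comap (AddMonoidHom.inr ℤ G)

lemma mem_KOf {H : AddSubgroup (ℤ × G)} {g : G} : g ∈ KOf H ↔ ((0 : ℤ), g) ∈ H := Iff.rfl

noncomputable def qOf (H : AddSubgroup (ℤ × G)) : G ⧸ KOf H :=
  QuotientAddGroup.mk (exists_c_mem H).choose

lemma mem_iff (H : AddSubgroup (ℤ × G)) {t : ℤ} {g : G} :
    (t, g) ∈ H ↔ ∃ k : ℤ, k * (cOf H : ℤ) = t ∧ k • (qOf H) = (g : G ⧸ KOf H) := by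
  have hg₀ : ((cOf H : ℤ), (exists_c_mem H).choose) ∈ H := (exists_c_mem H).choose_spec
  set g₀ := (exists_c_mem H).choose
  constructor
  · intro ht
    have h1 : t ∈ H.map (AddMonoidHom.fst ℤ G) := ⟨(t, g), ht, rfl⟩
    rw [map_fst_eq] at h1
    obtain ⟨k, hk⟩ := mem_zmultiples_iff.mp h1
    rw [smul_eq_mul] at hk
    refine ⟨k, hk, ?_⟩
    have h2 : ((0 : ℤ), g - k • g₀) ∈ H := by
      have h3 := H.sub_mem ht (H.zsmul_mem hg₀ k)
      have : ((t, g) - k • ((cOf H : ℤ), g₀)) = ((0 : ℤ), g - k • g₀) := by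
        rw [Prod.smul_mk, Prod.mk_sub_mk, smul_eq_mul, hk, sub_self]
      rwa [this] at h3
    have h4 : g - k • g₀ ∈ KOf H := h2
    show ((k • g₀ : G) : G ⧸ KOf H) = (g : G ⧸ KOf H)
    apply QuotientAddGroup.eq_iff_sub_mem.mpr
    simpa using (KOf H).neg_mem h4
  · rintro ⟨k, hk1, hk2⟩
    have h5 : ((k • g₀ : G) : G ⧸ KOf H) = (g : G ⧸ KOf H) := hk2
    have h6 : k • g₀ - g ∈ KOf H := QuotientAddGroup.eq_iff_sub_mem.mp h5
    have h7 : ((0 : ℤ), g - k • g₀) ∈ H := mem_KOf.mp (by simpa using (KOf H).neg_mem h6)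
    have h8 := H.add_mem (H.zsmul_mem hg₀ k) h7
    have : (k • ((cOf H : ℤ), g₀) + ((0 : ℤ), g - k • g₀)) = (t, g) := by
      rw [Prod.smul_mk, Prod.mk_add_mk, smul_eq_mul, hk1]
      simp
    rwa [this] at h8

lemma psi_eq (H : AddSubgroup (ℤ × G)) : psi (cOf H) (KOf H) (qOf H) = H := by
  ext ⟨t, g⟩
  rw [mem_psi, mem_iff H]

end Step

section Index

variable {G : Type*} [AddCommGroup G]

lemma index_eq (H : AddSubgroup (ℤ × G)) : H.index = cOf H * (KOf H).index := by
  set P : AddSubgroup (ℤ × G) := (zmultiples ((cOf H : ℤ))).prod ⊤ with hP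
  have hHP : H ≤ P := by
    rintro ⟨t, g⟩ hx
    refine ⟨?_, trivial⟩
    rw [← map_fst_eq]
    exact ⟨(t, g), hx, rfl⟩
  have hPindex : P.index = cOf H := by
    simp [hP]
  -- the homomorphism G →+ P
  have hmem0 : ∀ g : G, (((0 : ℤ), g) : ℤ × G) ∈ P := fun g => ⟨zero_mem _, trivial⟩
  set ψ : G →+ P :=
    { toFun := fun g => ⟨((0 : ℤ), g), hmem0 g⟩
      map_zero' := rfl
      map_add' := fun g g' => by
        apply Subtype.ext
        simp } with hψ
  set φ : G →+ (P ⧸ H.addSubgroupOf P) := (QuotientAddGroup.mk' (H.addSubgroupOf P)).comp ψ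
    with hφ
  have hker : φ.ker = KOf H := by
    ext g
    simp only [hφ, AddMonoidHom.mem_ker, AddMonoidHom.comp_apply, QuotientAddGroup.mk'_apply,
      QuotientAddGroup.eq_zero_iff, mem_addSubgroupOf]
    exact Iff.rfl
  have hsurj : Function.Surjective φ := by
    intro x
    induction x using QuotientAddGroup.induction_on with
    | H p =>
      obtain ⟨⟨t, g⟩, hp⟩ := p
      obtain ⟨k, hk'⟩ := mem_zmultiples_iff.mp hp.1
      have hk : k * (cOf H : ℤ) = t := by simpa using hk'
      have hg₀ : ((cOf H : ℤ), (exists_c_mem H).choose) ∈ H := (exists_c_mem H).choose_spec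
      set g₀ := (exists_c_mem H).choose
      refine ⟨g - k • g₀, ?_⟩
      rw [hφ, AddMonoidHom.comp_apply, QuotientAddGroup.mk'_apply]
      apply (QuotientAddGroup.eq_iff_sub_mem).mpr
      rw [mem_addSubgroupOf]
      have : ((ψ (g - k • g₀) : P) : ℤ × G) - (⟨(t, g), hp⟩ : P) = -(k • ((cOf H : ℤ), g₀)) := by
        show (((0 : ℤ), g - k • g₀) : ℤ × G) - (t, g) = _
        rw [Prod.smul_mk, Prod.neg_mk, Prod.mk_sub_mk, smul_eq_mul, ← hk]
        simp
      show ((ψ (g - k • g₀) - ⟨(t, g), hp⟩ : P) : ℤ × G) ∈ H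
      rw [AddSubgroup.coe_sub, this]
      exact H.neg_mem (H.zsmul_mem hg₀ k)
  have hcard : (KOf H).index = H.relIndex P := by
    rw [AddSubgroup.index, AddSubgroup.relIndex, AddSubgroup.index, ← hker]
    exact Nat.card_congr (QuotientAddGroup.quotientKerEquivOfSurjective φ hsurj).toEquiv
  rw [← AddSubgroup.relIndex_mul_index hHP, hPindex, ← hcard, mul_comm]

end Index

section Psi

variable {G : Type*} [AddCommGroup G]

lemma KOf_psi {c : ℕ} (hc : 0 < c) (K : AddSubgroup G) (q : G ⧸ K) :
    KOf (psi c K q) = K := by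
  ext g
  rw [mem_KOf, mem_psi]
  constructor
  · rintro ⟨k, hk1, hk2⟩
    have hk0 : k = 0 := by
      have : (c : ℤ) ≠ 0 := by exact_mod_cast hc.ne'
      rcases mul_eq_zero.mp hk1 with h | h
      · exact h
      · exact absurd h this
    rw [hk0, zero_smul] at hk2
    rw [← QuotientAddGroup.eq_zero_iff, ← hk2]
  · intro hg
    exact ⟨0, by simp, by rw [zero_smul]; exact ((QuotientAddGroup.eq_zero_iff g).mpr hg).symm⟩

lemma map_fst_psi (c : ℕ) (K : AddSubgroup G) (q : G ⧸ K) :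
    (psi c K q).map (AddMonoidHom.fst ℤ G) = zmultiples ((c : ℤ)) := by
  ext t
  constructor
  · rintro ⟨⟨t', g⟩, hx, rfl⟩
    obtain ⟨k, hk1, -⟩ := mem_psi.mp hx
    exact mem_zmultiples_iff.mpr ⟨k, by simpa [smul_eq_mul] using hk1⟩
  · intro ht
    obtain ⟨k, hk⟩ := mem_zmultiples_iff.mp ht
    obtain ⟨g, hg⟩ := QuotientAddGroup.mk_surjective (k • q)
    exact ⟨(t, g), mem_psi.mpr ⟨k, by simpa [smul_eq_mul] using hk, hg.symm⟩, rfl⟩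

lemma cOf_psi (c : ℕ) (K : AddSubgroup G) (q : G ⧸ K) : cOf (psi c K q) = c := by
  rw [cOf, map_fst_psi, Int.index_zmultiples, Int.natAbs_natCast]

lemma index_psi {c : ℕ} (hc : 0 < c) (K : AddSubgroup G) (q : G ⧸ K) :
    (psi c K q).index = c * K.index := by
  rw [index_eq, cOf_psi, KOf_psi hc]

end Psi

section Equiv

variable {G : Type*} [AddCommGroup G]

/-- The sigma type classifying index-`n` subgroups of `ℤ × G`. -/
def stepType (G : Type*) [AddCommGroup G] (n : ℕ) : Type _ :=
  Σ d : n.divisors, Σ K : {K : AddSubgroup G // K.index = (d : ℕ)}, G ⧸ K.1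

lemma psi_inj_q {c : ℕ} (hc : 0 < c) {K : AddSubgroup G} {q q' : G ⧸ K}
    (h : psi c K q = psi c K q') : q = q' := by
  obtain ⟨g, hg⟩ := QuotientAddGroup.mk_surjective q
  have h1 : ((c : ℤ), g) ∈ psi c K q := mem_psi.mpr ⟨1, by simp, by simp [hg]⟩
  rw [h] at h1
  obtain ⟨k, hk1, hk2⟩ := mem_psi.mp h1
  have hcne : (c : ℤ) ≠ 0 := by exact_mod_cast hc.ne'
  have hk : k = 1 := by
    have : k * (c : ℤ) = 1 * (c : ℤ) := by rw [one_mul]; exact hk1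
    exact mul_right_cancel₀ hcne this
  rw [hk, one_smul] at hk2
  rw [← hg, ← hk2]

noncomputable def stepEquiv (n : ℕ) (hn : 0 < n) :
    stepType G n ≃ {H : AddSubgroup (ℤ × G) // H.index = n} := by
  refine Equiv.ofBijective
    (fun x => ⟨psi (n / (x.1 : ℕ)) x.2.1.1 x.2.2, ?_⟩) ⟨?_, ?_⟩
  · have hd := Nat.mem_divisors.mp x.1.2
    have hdpos : 0 < (x.1 : ℕ) := Nat.pos_of_mem_divisors x.1.2
    have hcpos : 0 < n / (x.1 : ℕ) := Nat.div_pos (Nat.le_of_dvd hn hd.1) hdpos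
    rw [index_psi hcpos, x.2.1.2, Nat.div_mul_cancel hd.1]
  · rintro ⟨dd, KK, q⟩ ⟨dd', KK', q'⟩ h
    have h0 : psi (n / (dd : ℕ)) KK.1 q = psi (n / (dd' : ℕ)) KK'.1 q' :=
      congrArg Subtype.val h
    have hdvd := (Nat.mem_divisors.mp dd.2).1
    have hdvd' := (Nat.mem_divisors.mp dd'.2).1
    have hcpos : 0 < n / (dd : ℕ) :=
      Nat.div_pos (Nat.le_of_dvd hn hdvd) (Nat.pos_of_mem_divisors dd.2)
    have hc : n / (dd : ℕ) = n / (dd' : ℕ) := by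
      have h1 := congrArg cOf h0
      rwa [cOf_psi, cOf_psi] at h1
    have hdd : dd = dd' := Subtype.ext (by
      calc (dd : ℕ) = n / (n / (dd : ℕ)) := (Nat.div_div_self hdvd hn.ne').symm
        _ = n / (n / (dd' : ℕ)) := by rw [hc]
        _ = (dd' : ℕ) := Nat.div_div_self hdvd' hn.ne')
    subst hdd
    have hKK : KK = KK' := Subtype.ext (by
      have h1 := congrArg KOf h0
      rwa [KOf_psi hcpos, KOf_psi hcpos] at h1)
    subst hKK
    have hq : q = q' := psi_inj_q hcpos h0
    subst hq
    rfl
  · rintro ⟨H, hH⟩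
    have hdpos : 0 < (KOf H).index := by
      rcases Nat.eq_zero_or_pos (KOf H).index with h | h
      · rw [index_eq, h, mul_zero] at hH; omega
      · exact h
    have hdvd : (KOf H).index ∣ n := ⟨cOf H, by rw [← hH, index_eq, mul_comm]⟩
    refine ⟨⟨⟨(KOf H).index, Nat.mem_divisors.mpr ⟨hdvd, hn.ne'⟩⟩, ⟨KOf H, rfl⟩, qOf H⟩, ?_⟩
    apply Subtype.ext
    show psi (n / (KOf H).index) (KOf H) (qOf H) = H
    have hc : n / (KOf H).index = cOf H := by
      rw [← hH, index_eq, Nat.mul_div_cancel _ hdpos]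
    rw [hc, psi_eq]

end Equiv

section Counting

variable {G : Type*} [AddCommGroup G]

lemma nat_card_sigma {ι : Type*} [Fintype ι] (f : ι → Type*) [∀ i, Finite (f i)] :
    Nat.card (Σ i, f i) = ∑ i, Nat.card (f i) := by
  have : ∀ i, Fintype (f i) := fun i => Fintype.ofFinite _
  simp only [Nat.card_eq_fintype_card, Fintype.card_sigma]

lemma finite_quot (K : AddSubgroup G) (h : K.index ≠ 0) : Finite (G ⧸ K) := by
  have : K.FiniteIndex := ⟨h⟩
  infer_instance

lemma stepType_finite (n : ℕ) (hn : 0 < n)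
    (hfin : ∀ d : ℕ, 0 < d → Finite {K : AddSubgroup G // K.index = d}) :
    Finite (stepType G n) := by
  have h1 : ∀ d : n.divisors, Finite (Σ K : {K : AddSubgroup G // K.index = (d : ℕ)}, G ⧸ K.1) := by
    intro d
    have hdpos : 0 < (d : ℕ) := Nat.pos_of_mem_divisors d.2
    have := hfin (d : ℕ) hdpos
    have : ∀ K : {K : AddSubgroup G // K.index = (d : ℕ)}, Finite (G ⧸ K.1) := fun K =>
      finite_quot K.1 (by rw [K.2]; exact hdpos.ne')
    exact Finite.instSigma
  exact Finite.instSigma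

lemma stepType_card (n : ℕ) (hn : 0 < n)
    (hfin : ∀ d : ℕ, 0 < d → Finite {K : AddSubgroup G // K.index = d}) :
    Nat.card (stepType G n)
      = ∑ d ∈ n.divisors, Nat.card {K : AddSubgroup G // K.index = d} * d := by
  have hq : ∀ d : n.divisors, ∀ K : {K : AddSubgroup G // K.index = (d : ℕ)},
      Finite (G ⧸ K.1) := fun d K =>
    finite_quot K.1 (by rw [K.2]; exact (Nat.pos_of_mem_divisors d.2).ne')
  have hK : ∀ d : n.divisors, Finite {K : AddSubgroup G // K.index = (d : ℕ)} := fun d =>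
    hfin _ (Nat.pos_of_mem_divisors d.2)
  have h1 : Nat.card (stepType G n)
      = ∑ d : n.divisors, Nat.card (Σ K : {K : AddSubgroup G // K.index = (d : ℕ)}, G ⧸ K.1) := by
    have : ∀ d : n.divisors,
        Finite (Σ K : {K : AddSubgroup G // K.index = (d : ℕ)}, G ⧸ K.1) := fun d => by
      have := hK d; have := hq d; exact Finite.instSigma
    exact nat_card_sigma _
  rw [h1, ← Finset.sum_coe_sort n.divisors
    (fun d => Nat.card {K : AddSubgroup G // K.index = d} * d)]
  congr 1
  funext d
  have i1 := hK d
  have i2 := hq d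
  have i3 : Fintype {K : AddSubgroup G // K.index = (d : ℕ)} := Fintype.ofFinite _
  rw [nat_card_sigma]
  have h2 : ∀ K : {K : AddSubgroup G // K.index = (d : ℕ)}, Nat.card (G ⧸ K.1) = (d : ℕ) := by
    intro K
    rw [← AddSubgroup.index_eq_card, K.2]
  rw [Finset.sum_congr rfl (fun K _ => h2 K), Finset.sum_const, Finset.card_univ,
    Nat.card_eq_fintype_card, smul_eq_mul]

end Counting

section Levels

noncomputable instance intUnique (d : ℕ) : Unique {H : AddSubgroup ℤ // H.index = d} where
  default := ⟨AddSubgroup.zmultiples (d : ℤ), by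
    rw [Int.index_zmultiples, Int.natAbs_natCast]⟩
  uniq := fun ⟨H, hH⟩ => Subtype.ext (by
    show H = AddSubgroup.zmultiples (d : ℤ)
    rw [int_eq_zmultiples_index H, hH])

lemma card_level1 (d : ℕ) : Nat.card {H : AddSubgroup ℤ // H.index = d} = 1 :=
  Nat.card_unique

lemma finite_level1 (d : ℕ) : Finite {H : AddSubgroup ℤ // H.index = d} :=
  inferInstance

lemma finite_level2 (m : ℕ) (hm : 0 < m) :
    Finite {K : AddSubgroup (ℤ × ℤ) // K.index = m} := by
  have := stepType_finite (G := ℤ) m hm (fun d _ => finite_level1 d)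
  exact Finite.of_equiv _ (stepEquiv m hm)

lemma card_level2 (m : ℕ) (hm : 0 < m) :
    Nat.card {K : AddSubgroup (ℤ × ℤ) // K.index = m} = ∑ b ∈ m.divisors, b := by
  rw [← Nat.card_congr (stepEquiv (G := ℤ) m hm),
    stepType_card m hm (fun d _ => finite_level1 d)]
  simp [card_level1]

lemma card_level3 (n : ℕ) (hn : 0 < n) :
    Nat.card {H : AddSubgroup (ℤ × ℤ × ℤ) // H.index = n}
      = ∑ d ∈ n.divisors, (∑ b ∈ d.divisors, b) * d := by
  rw [← Nat.card_congr (stepEquiv (G := ℤ × ℤ) n hn),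
    stepType_card n hn (fun d hd => finite_level2 d hd)]
  exact Finset.sum_congr rfl fun d hd => by
    rw [card_level2 d (Nat.pos_of_mem_divisors hd)]

end Levels

/-- `omegaFn n = ∑_{a*b*c = n} a² * b`, summing over ordered triples of positive integers. -/
def omegaFn (n : ℕ) : ℕ :=
  ∑ t ∈ (Finset.range (n+1) ×ˢ Finset.range (n+1) ×ˢ Finset.range (n+1)).filter
      (fun t => 0 < t.1 ∧ 0 < t.2.1 ∧ 0 < t.2.2 ∧ t.1 * t.2.1 * t.2.2 = n),
    t.1 ^ 2 * t.2.1

lemma omega_eq (n : ℕ) (hn : 0 < n) :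
    omegaFn n = ∑ d ∈ n.divisors, (∑ b ∈ d.divisors, b) * d := by
  have h : ∀ d ∈ n.divisors, (∑ b ∈ d.divisors, b) * d = ∑ b ∈ d.divisors, b * d :=
    fun d _ => Finset.sum_mul _ _ _
  rw [Finset.sum_congr rfl h, Finset.sum_sigma', omegaFn]
  refine (Finset.sum_nbij' (fun p => (p.2, p.1 / p.2, n / p.1))
      (fun t => ⟨t.1 * t.2.1, t.1⟩) ?_ ?_ ?_ ?_ ?_).symm
  · rintro ⟨d, b⟩ hp
    simp only [Finset.mem_sigma, Nat.mem_divisors] at hp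
    obtain ⟨⟨hdn, hn0⟩, hbd, hd0⟩ := hp
    have hb0 : 0 < b := Nat.pos_of_dvd_of_pos hbd (Nat.pos_of_ne_zero hd0)
    have hdpos : 0 < d := Nat.pos_of_ne_zero hd0
    have hdlen : d ≤ n := Nat.le_of_dvd hn hdn
    have hblen : b ≤ d := Nat.le_of_dvd hdpos hbd
    have hdiv1 : b * (d / b) = d := Nat.mul_div_cancel' hbd
    have hdiv2 : d * (n / d) = n := Nat.mul_div_cancel' hdn
    have hprod : b * (d / b) * (n / d) = n := by rw [hdiv1, hdiv2]
    have h1 : d / b ≤ n := le_trans (Nat.div_le_self _ _) hdlen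
    have h2 : n / d ≤ n := Nat.div_le_self _ _
    have h3 : 0 < d / b := Nat.div_pos hblen hb0
    have h4 : 0 < n / d := Nat.div_pos hdlen hdpos
    simp only [Finset.mem_filter, Finset.mem_product, Finset.mem_range]
    exact ⟨⟨by omega, by omega, by omega⟩, hb0, h3, h4, hprod⟩
  · rintro ⟨x, y, z⟩ ht
    simp only [Finset.mem_filter, Finset.mem_product, Finset.mem_range] at ht
    obtain ⟨-, hx, hy, hz, hxyz⟩ := ht
    simp only [Finset.mem_sigma, Nat.mem_divisors]
    refine ⟨⟨⟨z, hxyz.symm⟩, hn.ne'⟩, ⟨y, rfl⟩, ?_⟩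
    positivity
  · rintro ⟨d, b⟩ hp
    simp only [Finset.mem_sigma, Nat.mem_divisors] at hp
    obtain ⟨⟨hdn, hn0⟩, hbd, hd0⟩ := hp
    simp [Nat.mul_div_cancel' hbd]
  · rintro ⟨x, y, z⟩ ht
    simp only [Finset.mem_filter, Finset.mem_product, Finset.mem_range] at ht
    obtain ⟨-, hx, hy, hz, hxyz⟩ := ht
    have h1 : x * y / x = y := Nat.mul_div_cancel_left y hx
    have h2 : n / (x * y) = z := by
      rw [← hxyz]
      exact Nat.mul_div_cancel_left z (by positivity)
    simp [h1, h2]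
  · rintro ⟨d, b⟩ hp
    simp only [Finset.mem_sigma, Nat.mem_divisors] at hp
    obtain ⟨⟨hdn, hn0⟩, hbd, hd0⟩ := hp
    show b * d = b ^ 2 * (d / b)
    rw [pow_two, mul_assoc, Nat.mul_div_cancel' hbd]

theorem stmt3 (n : ℕ) (hn : 0 < n) :
    Nat.card {H : AddSubgroup (ℤ × ℤ × ℤ) // H.index = n} = omegaFn n :=
  (card_level3 n hn).trans (omega_eq n hn).symm
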